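/- arXiv:2410.15603 — 2 statements merged into one kernel-verified Lean document; each statement's English description precedes it below -/
import Mathlib

section
/- Strong joint concavity of fidelity (Theorem 1): Let d ≥ 1 and n ≥ 1. Let (ρ_i)_{i=1}^n and (σ_i)_{i=1}^n be density matrices on ℂ^d, and let (p_i)_{i=1}^n and (q_i)_{i=1}^n be probability distributions (p_i, q_i ≥ 0, ∑_i p_i = 1, ∑_i q_i = 1). Then F(∑_i p_i ρ_i, ∑_i q_i σ_i) ≥ ∑_i √(p_i q_i) · F(ρ_i, σ_i). -/
open Matrix
open scoped ComplexOrder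

/-- The unique positive semidefinite square root of a positive semidefinite matrix
(junk value `0` if the matrix is not positive semidefinite). -/
noncomputable def msqrt {d : ℕ} (A : Matrix (Fin d) (Fin d) ℂ) : Matrix (Fin d) (Fin d) ℂ :=
  open scoped Classical in
  if h : A.PosSemidef then
    h.1.eigenvectorUnitary.1 * diagonal ((↑) ∘ (√·) ∘ h.1.eigenvalues) *
      (star h.1.eigenvectorUnitary : Matrix (Fin d) (Fin d) ℂ)
  else 0

/-- The fidelity F(ρ,σ) = tr √(√ρ · σ · √ρ), as a real number. -/
noncomputable def fid {d : ℕ} (ρ σ : Matrix (Fin d) (Fin d) ℂ) : ℝ :=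
  ((msqrt (msqrt ρ * σ * msqrt ρ)).trace).re

noncomputable def Matrix.PosSemidef.sqrt {d : ℕ} {A : Matrix (Fin d) (Fin d) ℂ} (h : A.PosSemidef) :
    Matrix (Fin d) (Fin d) ℂ :=
  h.1.eigenvectorUnitary.1 * diagonal ((↑) ∘ (√·) ∘ h.1.eigenvalues) *
    (star h.1.eigenvectorUnitary : Matrix (Fin d) (Fin d) ℂ)

lemma Matrix.PosSemidef.posSemidef_sqrt {d : ℕ} {A : Matrix (Fin d) (Fin d) ℂ}
    (h : A.PosSemidef) : h.sqrt.PosSemidef := by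
  unfold Matrix.PosSemidef.sqrt
  have hD : (diagonal ((↑) ∘ (√·) ∘ h.1.eigenvalues : Fin d → ℂ)).PosSemidef :=
    Matrix.PosSemidef.diagonal (fun i => by simp [Complex.zero_le_real, Real.sqrt_nonneg])
  have := hD.mul_mul_conjTranspose_same (h.1.eigenvectorUnitary : Matrix (Fin d) (Fin d) ℂ)
  rw [Matrix.star_eq_conjTranspose]
  exact this

lemma Matrix.PosSemidef.sqrt_mul_self {d : ℕ} {A : Matrix (Fin d) (Fin d) ℂ}
    (h : A.PosSemidef) : h.sqrt * h.sqrt = A := by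
  unfold Matrix.PosSemidef.sqrt
  have key : ∀ X D S : Matrix (Fin d) (Fin d) ℂ, S * X = 1 →
      X * D * S * (X * D * S) = X * (D * D) * S := by
    intro X D S hSX
    calc X * D * S * (X * D * S) = X * D * (S * X) * D * S := by noncomm_ring
      _ = X * (D * D) * S := by rw [hSX]; noncomm_ring
  rw [key _ _ _ (Unitary.coe_star_mul_self _), diagonal_mul_diagonal]
  conv_rhs => rw [h.1.spectral_theorem, Unitary.conjStarAlgAut_apply]
  congr 2
  congr 1
  funext i
  simp [← Complex.ofReal_mul, Real.mul_self_sqrt (h.eigenvalues_nonneg i)]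

set_option maxHeartbeats 1000000

namespace SJC
variable {d : ℕ}

lemma csmul_eq {c : ℝ} (A : Matrix (Fin d) (Fin d) ℂ) : c • A = (c : ℂ) • A := by
  ext i j; simp [Matrix.smul_apply, Complex.real_smul]

lemma smul_psd {A : Matrix (Fin d) (Fin d) ℂ} (hA : A.PosSemidef) {c : ℝ} (hc : 0 ≤ c) :
    (c • A).PosSemidef := by
  rw [csmul_eq]
  refine Matrix.PosSemidef.of_dotProduct_mulVec_nonneg ?_ ?_
  · have h1 := hA.isHermitian
    unfold Matrix.IsHermitian at *
    rw [conjTranspose_smul, h1]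
    congr 1
    simp [Complex.ext_iff]
  · intro x
    rw [smul_mulVec, dotProduct_smul]
    exact smul_nonneg (by exact_mod_cast Complex.zero_le_real.mpr hc) (hA.dotProduct_mulVec_nonneg x)

lemma trace_re_nonneg {A : Matrix (Fin d) (Fin d) ℂ} (hA : A.PosSemidef) : 0 ≤ A.trace.re := by
  have h : ∀ i, 0 ≤ (A i i).re := by
    intro i
    have := hA.re_dotProduct_nonneg (Pi.single i 1)
    simpa [Matrix.mulVec_single, dotProduct, Pi.single_apply, Finset.sum_ite_eq] using this
  rw [Matrix.trace, Complex.re_sum]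
  exact Finset.sum_nonneg fun i _ => h i

lemma psd_sand {A B : Matrix (Fin d) (Fin d) ℂ} (hA : A.IsHermitian) (hB : B.PosSemidef) :
    (A * B * A).PosSemidef := by
  have := hB.mul_mul_conjTranspose_same A
  rwa [hA.eq] at this

lemma trace_mul_re_nonneg {A B : Matrix (Fin d) (Fin d) ℂ} (hA : A.PosSemidef)
    (hB : B.PosSemidef) : 0 ≤ (A * B).trace.re := by
  classical
  have h2 : (A * B).trace = (hA.sqrt * B * hA.sqrt).trace := by
    conv_lhs => rw [← hA.sqrt_mul_self]
    rw [mul_assoc, Matrix.trace_mul_comm, mul_assoc]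
  rw [h2]
  exact trace_re_nonneg (psd_sand hA.posSemidef_sqrt.isHermitian hB)

lemma pd_of_psd_isUnit {Z : Matrix (Fin d) (Fin d) ℂ} (h : Z.PosSemidef) (hu : IsUnit Z) :
    Z.PosDef := by
  refine Matrix.PosDef.of_dotProduct_mulVec_pos h.isHermitian fun x hx => ?_
  rcases lt_or_eq_of_le (h.dotProduct_mulVec_nonneg x) with h' | h'
  · exact h'
  · exfalso
    have h0 : Z *ᵥ x = 0 := (h.dotProduct_mulVec_zero_iff x).mp h'.symm
    have hinj : Function.Injective (Z.mulVec) := (Matrix.mulVec_injective_iff_isUnit).mpr hu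
    exact hx (hinj (by simpa using h0))

lemma cmul_pos {c : ℝ} (hc : 0 < c) {z : ℂ} (hz : 0 < z) : 0 < (c : ℂ) * z := by
  rw [Complex.lt_def] at *
  constructor
  · simp only [Complex.mul_re, Complex.ofReal_re, Complex.ofReal_im, Complex.zero_re]
    rw [← hz.2]
    simp only [Complex.zero_im, mul_zero, zero_mul, sub_zero]
    exact mul_pos hc (by simpa using hz.1)
  · simp only [Complex.mul_im, Complex.ofReal_re, Complex.ofReal_im, Complex.zero_im]
    rw [← hz.2]
    simp

lemma psd_add_smul_one_pd {A : Matrix (Fin d) (Fin d) ℂ} (hA : A.PosSemidef) {c : ℝ}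
    (hc : 0 < c) : (A + c • (1 : Matrix (Fin d) (Fin d) ℂ)).PosDef := by
  refine Matrix.PosDef.of_dotProduct_mulVec_pos (hA.isHermitian.add ((smul_psd Matrix.PosSemidef.one hc.le).isHermitian)) fun x hx => ?_
  rw [add_mulVec, dotProduct_add]
  have h1 : 0 < star x ⬝ᵥ (c • (1 : Matrix (Fin d) (Fin d) ℂ)) *ᵥ x := by
    rw [csmul_eq, smul_mulVec, dotProduct_smul, one_mulVec, smul_eq_mul]
    exact cmul_pos hc (Matrix.dotProduct_star_self_pos_iff.mpr hx)
  exact add_pos_of_nonneg_of_pos (hA.dotProduct_mulVec_nonneg x) h1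

lemma cs_bound (x v : Fin d → ℂ) :
    (star x ⬝ᵥ v).re ^ 2 ≤ (star x ⬝ᵥ x).re * (star v ⬝ᵥ v).re := by
  let X : EuclideanSpace ℂ (Fin d) := WithLp.toLp 2 x
  let V : EuclideanSpace ℂ (Fin d) := WithLp.toLp 2 v
  have hinner : (inner ℂ X V : ℂ) = star x ⬝ᵥ v := by
    rw [EuclideanSpace.inner_eq_star_dotProduct, dotProduct_comm]
  have h1 : ‖(inner ℂ X V : ℂ)‖ ≤ ‖X‖ * ‖V‖ := norm_inner_le_norm X V
  have h2 : (star x ⬝ᵥ x).re = ‖X‖ ^ 2 := by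
    have := @inner_self_eq_norm_sq ℂ _ _ _ _ X
    rw [← this]
    have : (inner ℂ X X : ℂ) = star x ⬝ᵥ x := by
      rw [EuclideanSpace.inner_eq_star_dotProduct, dotProduct_comm]
    rw [this]
    rfl
  have h3 : (star v ⬝ᵥ v).re = ‖V‖ ^ 2 := by
    have := @inner_self_eq_norm_sq ℂ _ _ _ _ V
    rw [← this]
    have : (inner ℂ V V : ℂ) = star v ⬝ᵥ v := by
      rw [EuclideanSpace.inner_eq_star_dotProduct, dotProduct_comm]
    rw [this]
    rfl
  have h4 : (star x ⬝ᵥ v).re ^ 2 ≤ ‖(inner ℂ X V : ℂ)‖ ^ 2 := by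
    rw [hinner]
    have := Complex.abs_re_le_norm (star x ⬝ᵥ v)
    have h5 : |(star x ⬝ᵥ v).re| ^ 2 = (star x ⬝ᵥ v).re ^ 2 := sq_abs _
    rw [← h5]
    nlinarith [abs_nonneg (star x ⬝ᵥ v).re, norm_nonneg (star x ⬝ᵥ v)]
  calc (star x ⬝ᵥ v).re ^ 2 ≤ ‖(inner ℂ X V : ℂ)‖ ^ 2 := h4
    _ ≤ (‖X‖ * ‖V‖) ^ 2 := by nlinarith [norm_nonneg (inner ℂ X V : ℂ), norm_nonneg X, norm_nonneg V]
    _ = (star x ⬝ᵥ x).re * (star v ⬝ᵥ v).re := by rw [h2, h3]; ring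

lemma dot_self_real (v : Fin d → ℂ) : star v ⬝ᵥ v = ((star v ⬝ᵥ v).re : ℂ) := by
  have h := dotProduct_star_self_nonneg v
  rw [Complex.le_def] at h
  exact Complex.ext rfl (by simpa using h.2.symm)

lemma flip_contraction {T : Matrix (Fin d) (Fin d) ℂ} (h : (1 - Tᴴ * T).PosSemidef) :
    (1 - T * Tᴴ).PosSemidef := by
  refine Matrix.PosSemidef.of_dotProduct_mulVec_nonneg ?_ ?_
  · have : (1 - T * Tᴴ)ᴴ = 1 - T * Tᴴ := by
      simp [conjTranspose_sub, conjTranspose_mul]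
    exact this
  intro x
  set y : Fin d → ℂ := Tᴴ *ᵥ x with hy
  have key1 : star x ⬝ᵥ ((T * Tᴴ) *ᵥ x) = star y ⬝ᵥ y := by
    rw [← Matrix.mulVec_mulVec, Matrix.dotProduct_mulVec]
    congr 1
    rw [hy, Matrix.star_mulVec, conjTranspose_conjTranspose]
  -- from h at y : ‖T y‖² ≤ ‖y‖²
  have h2 := h.dotProduct_mulVec_nonneg y
  rw [sub_mulVec, dotProduct_sub, one_mulVec, sub_nonneg, Complex.le_def] at h2
  have hTy : star x ⬝ᵥ (T *ᵥ y) = star y ⬝ᵥ y := by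
    rw [Matrix.dotProduct_mulVec]
    congr 1
    rw [hy, Matrix.star_mulVec, conjTranspose_conjTranspose]
  have hTyTy : star y ⬝ᵥ ((Tᴴ * T) *ᵥ y) = star (T *ᵥ y) ⬝ᵥ (T *ᵥ y) := by
    rw [← Matrix.mulVec_mulVec, Matrix.dotProduct_mulVec, ← Matrix.star_mulVec]
  set a : ℝ := (star y ⬝ᵥ y).re with ha
  set b : ℝ := (star x ⬝ᵥ x).re with hb
  set c : ℝ := (star (T *ᵥ y) ⬝ᵥ (T *ᵥ y)).re with hc
  have hca : c ≤ a := by rw [hc, ha, ← hTyTy]; exact h2.1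
  have ha0 : 0 ≤ a := by
    have := dotProduct_star_self_nonneg y
    rw [Complex.le_def] at this; simpa using this.1
  have hb0 : 0 ≤ b := by
    have := dotProduct_star_self_nonneg x
    rw [Complex.le_def] at this; simpa using this.1
  have hc0 : 0 ≤ c := by
    have := dotProduct_star_self_nonneg (T *ᵥ y)
    rw [Complex.le_def] at this; simpa using this.1
  have hcs : a ^ 2 ≤ b * c := by
    have := cs_bound x (T *ᵥ y)
    rw [hTy] at this
    rw [← ha, ← hb, ← hc] at this
    exact this
  have hab : a ≤ b := by
    rcases eq_or_lt_of_le ha0 with h0 | h0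
    · linarith
    · nlinarith
  -- conclude
  have hgoal : star x ⬝ᵥ ((1 - T * Tᴴ) *ᵥ x) = ((b - a : ℝ) : ℂ) := by
    rw [sub_mulVec, dotProduct_sub, one_mulVec, key1, dot_self_real x, dot_self_real y]
    push_cast
    rfl
  rw [hgoal]
  exact Complex.zero_le_real.mpr (by linarith)

lemma re_cmul (r : ℝ) (z : ℂ) : ((r:ℂ) * z).re = r * z.re := by simp [Complex.mul_re]

lemma msqrt_eq {A : Matrix (Fin d) (Fin d) ℂ} (h : A.PosSemidef) : msqrt A = h.sqrt :=
  dif_pos h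

lemma fid_eq {ρ σ : Matrix (Fin d) (Fin d) ℂ} (hρ : ρ.PosSemidef) (hσ : σ.PosSemidef) :
    fid ρ σ = ((psd_sand hρ.posSemidef_sqrt.isHermitian hσ).sqrt).trace.re := by
  unfold fid
  rw [msqrt_eq hρ, msqrt_eq (psd_sand hρ.posSemidef_sqrt.isHermitian hσ)]

lemma psd_add_csmul_one_pd {A : Matrix (Fin d) (Fin d) ℂ} (hA : A.PosSemidef) {c : ℝ}
    (hc : 0 < c) : (A + (c : ℂ) • (1 : Matrix (Fin d) (Fin d) ℂ)).PosDef := by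
  rw [← csmul_eq]; exact psd_add_smul_one_pd hA hc

lemma per_i {ρ σ Z : Matrix (Fin d) (Fin d) ℂ} (hρ : ρ.PosSemidef) (hσ : σ.PosSemidef)
    (hZ : Z.PosDef) {p q δ : ℝ} (hp : 0 ≤ p) (hq : 0 ≤ q) (hδ : 0 < δ) :
    2 * Real.sqrt (p * q) * (fid ρ σ - δ * d) ≤
      p * (ρ * Z⁻¹).trace.re + q * (σ * Z).trace.re := by
  classical
  set A := hρ.sqrt with hAdef
  have hApsd : A.PosSemidef := hρ.posSemidef_sqrt
  have hAh : A.IsHermitian := hApsd.isHermitian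
  have hAA : A * A = ρ := hρ.sqrt_mul_self
  set Sσ := hσ.sqrt with hSσdef
  have hSσpsd : Sσ.PosSemidef := hσ.posSemidef_sqrt
  have hSσh : Sσ.IsHermitian := hSσpsd.isHermitian
  have hSσSσ : Sσ * Sσ = σ := hσ.sqrt_mul_self
  have hN : (A * σ * A).PosSemidef := psd_sand hAh hσ
  set M := hN.sqrt with hMdef
  have hMpsd : M.PosSemidef := hN.posSemidef_sqrt
  have hMh : M.IsHermitian := hMpsd.isHermitian
  have hMM : M * M = A * σ * A := hN.sqrt_mul_self
  have hfid : fid ρ σ = M.trace.re := fid_eq hρ hσ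
  clear_value A Sσ M
  set Mδ := M + (δ : ℂ) • 1 with hMδdef
  have hMδ : Mδ.PosDef := psd_add_csmul_one_pd hMpsd hδ
  have hMδh : Mδ.IsHermitian := hMδ.isHermitian
  have hMδdet : IsUnit Mδ.det := hMδ.det_pos.ne'.isUnit
  set Mi := Mδ⁻¹ with hMidef
  have hMi : Mi.PosDef := hMδ.inv
  have hMih : Mi.IsHermitian := hMi.isHermitian
  have hMiMδ : Mi * Mδ = 1 := Matrix.nonsing_inv_mul _ hMδdet
  have hMδMi : Mδ * Mi = 1 := Matrix.mul_nonsing_inv _ hMδdet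
  set ZS := hZ.posSemidef.sqrt with hZSdef
  have hZSpsd : ZS.PosSemidef := hZ.posSemidef.posSemidef_sqrt
  have hZSh : ZS.IsHermitian := hZSpsd.isHermitian
  have hZSZS : ZS * ZS = Z := hZ.posSemidef.sqrt_mul_self
  have hZdet : IsUnit Z.det := hZ.det_pos.ne'.isUnit
  have hZSdet : IsUnit ZS.det := by
    have : Z.det = ZS.det * ZS.det := by rw [← hZSZS, Matrix.det_mul]
    rw [this] at hZdet
    exact isUnit_of_mul_isUnit_left hZdet
  set ZSi := ZS⁻¹ with hZSidef
  have hZSih : ZSi.IsHermitian := hZSh.inv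
  have hZSZSi : ZS * ZSi = 1 := Matrix.mul_nonsing_inv _ hZSdet
  have hZi : Z⁻¹ = ZSi * ZSi := by rw [← hZSZS, Matrix.mul_inv_rev]
  clear_value ZS
  set W := Mi * A * Sσ with hWdef
  set X := A * Mi * A * σ with hXdef
  set U := ((Real.sqrt p : ℝ) : ℂ) • (A * ZSi) with hUdef
  set V := ((Real.sqrt q : ℝ) : ℂ) • (W * Sσ * ZS) with hVdef
  -- conjTransposes
  have hUc : Uᴴ = ((Real.sqrt p : ℝ) : ℂ) • (ZSi * A) := by
    rw [hUdef, conjTranspose_smul, conjTranspose_mul, hAh.eq, hZSih.eq, Complex.star_def,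
      Complex.conj_ofReal]
  have hWc : Wᴴ = Sσ * A * Mi := by
    rw [hWdef, conjTranspose_mul, conjTranspose_mul, hAh.eq, hSσh.eq, hMih.eq, ← mul_assoc]
  have hVc : Vᴴ = ((Real.sqrt q : ℝ) : ℂ) • (ZS * (Sσ * Wᴴ)) := by
    rw [hVdef, conjTranspose_smul, conjTranspose_mul, conjTranspose_mul, hSσh.eq, hZSh.eq,
      Complex.star_def, Complex.conj_ofReal]
  -- step h3 : trace of UᴴU
  have h3 : (Uᴴ * U).trace.re = p * (ρ * Z⁻¹).trace.re := by
    rw [hUc, hUdef, smul_mul_smul_comm, ← Complex.ofReal_mul, Real.mul_self_sqrt hp]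
    have tr1 : ((ZSi * A) * (A * ZSi)).trace = (ρ * Z⁻¹).trace := by
      have e : (ZSi * A) * (A * ZSi) = ZSi * ρ * ZSi := by rw [← hAA]; noncomm_ring
      rw [e, Matrix.trace_mul_cycle, hZi, Matrix.trace_mul_comm]
    rw [Matrix.trace_smul, smul_eq_mul, re_cmul, tr1]
  -- contraction fact
  have hD : (1 - Wᴴ * W).PosSemidef := by
    have hE : (Mδ * Mδ - M * M).PosSemidef := by
      have he : Mδ * Mδ - M * M = ((2*δ : ℝ) : ℂ) • M + ((δ*δ : ℝ) : ℂ) • 1 := by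
        rw [hMδdef]
        push_cast
        rw [mul_add, add_mul, add_mul]
        simp only [smul_mul_assoc, mul_smul_comm, one_mul, mul_one, smul_smul]
        module
      rw [he, ← csmul_eq, ← csmul_eq]
      exact (smul_psd hMpsd (by positivity)).add (smul_psd Matrix.PosSemidef.one (by positivity))
    have h1WW : 1 - W * Wᴴ = Mi * (Mδ * Mδ - M * M) * Mi := by
      have e1 : W * Wᴴ = Mi * (M * M) * Mi := by
        rw [hWdef, hWc, hMM, ← hSσSσ]
        noncomm_ring
      have e2 : Mi * (Mδ * Mδ) * Mi = 1 := by
        calc Mi * (Mδ * Mδ) * Mi = (Mi * Mδ) * (Mδ * Mi) := by noncomm_ring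
        _ = 1 := by rw [hMiMδ, hMδMi, one_mul]
      rw [e1, ← e2]
      noncomm_ring
    have hpsd1 : (1 - W * Wᴴ).PosSemidef := by
      rw [h1WW]; exact psd_sand hMih hE
    have := flip_contraction (T := Wᴴ) (by rwa [conjTranspose_conjTranspose])
    rwa [conjTranspose_conjTranspose] at this
  -- step h4
  have h4 : (Vᴴ * V).trace.re ≤ q * (σ * Z).trace.re := by
    have hVV : Vᴴ * V = ((q : ℝ) : ℂ) • ((ZS * Sσ) * (Wᴴ * W) * (Sσ * ZS)) := by
      rw [hVc, hVdef, smul_mul_smul_comm, ← Complex.ofReal_mul, Real.mul_self_sqrt hq]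
      congr 1
      noncomm_ring
    have hsplit : (ZS * Sσ) * (Wᴴ * W) * (Sσ * ZS)
        = (ZS * Sσ) * (Sσ * ZS) - (ZS * Sσ) * (1 - Wᴴ * W) * (Sσ * ZS) := by
      noncomm_ring
    have htr2 : ((ZS * Sσ) * (Sσ * ZS)).trace = (σ * Z).trace := by
      have e : (ZS * Sσ) * (Sσ * ZS) = ZS * σ * ZS := by rw [← hSσSσ]; noncomm_ring
      rw [e, Matrix.trace_mul_cycle, hZSZS, Matrix.trace_mul_comm]
    have hpos : 0 ≤ ((ZS * Sσ) * (1 - Wᴴ * W) * (Sσ * ZS)).trace.re := by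
      have hG : (ZS * Sσ) = (Sσ * ZS)ᴴ := by rw [conjTranspose_mul, hSσh.eq, hZSh.eq]
      rw [hG]
      exact trace_re_nonneg (hD.conjTranspose_mul_mul_same (Sσ * ZS))
    rw [hVV, Matrix.trace_smul, smul_eq_mul, re_cmul, hsplit, Matrix.trace_sub, Complex.sub_re,
      htr2]
    have := mul_le_mul_of_nonneg_left (sub_le_self ((σ * Z).trace.re) hpos) hq
    linarith [this]
  -- step h6 : cross terms
  have htrX : ((ZSi * A) * (W * Sσ * ZS)).trace = X.trace := by
    have e1 : (ZSi * A) * (W * Sσ * ZS) = ZSi * ((A * W * Sσ) * ZS) := by noncomm_ring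
    rw [e1, Matrix.trace_mul_comm]
    have e2 : (A * W * Sσ) * ZS * ZSi = A * W * Sσ := by
      rw [mul_assoc, hZSZSi, mul_one]
    rw [e2, hXdef, hWdef]
    congr 1
    rw [← hSσSσ]
    noncomm_ring
  have h6 : (Uᴴ * V).trace.re = (Real.sqrt p * Real.sqrt q) * X.trace.re := by
    rw [hUc, hVdef, smul_mul_smul_comm, ← Complex.ofReal_mul, Matrix.trace_smul, smul_eq_mul,
      re_cmul, htrX]
  have h6' : (Vᴴ * U).trace.re = (Real.sqrt p * Real.sqrt q) * X.trace.re := by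
    have : Vᴴ * U = (Uᴴ * V)ᴴ := by rw [conjTranspose_mul, conjTranspose_conjTranspose]
    rw [this, Matrix.trace_conjTranspose]
    rw [Complex.star_def, Complex.conj_re, h6]
  -- step h1 : Frobenius positivity
  have h1 : 0 ≤ (Uᴴ * U).trace.re + (Vᴴ * V).trace.re - (Uᴴ * V).trace.re
      - (Vᴴ * U).trace.re := by
    have hpsd := Matrix.posSemidef_conjTranspose_mul_self (U - V)
    have hexp : (U - V)ᴴ * (U - V) = Uᴴ * U + Vᴴ * V - Uᴴ * V - Vᴴ * U := by
      rw [conjTranspose_sub, sub_mul, mul_sub, mul_sub]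
      abel
    have := trace_re_nonneg hpsd
    rw [hexp, Matrix.trace_sub, Matrix.trace_sub, Matrix.trace_add] at this
    simpa using this
  -- step h7 : trace X lower bound
  have h7 : M.trace.re - δ * d ≤ X.trace.re := by
    have e0 : X = A * (Mi * (A * σ)) := by rw [hXdef]; noncomm_ring
    have e1 : X.trace = (Mi * (M * M)).trace := by
      rw [e0, Matrix.trace_mul_comm, hMM]
      congr 1
      noncomm_ring
    have eMiM : Mi * M = 1 - (δ : ℂ) • Mi := by
      have : M = Mδ - (δ : ℂ) • 1 := by rw [hMδdef]; abel
      rw [this, mul_sub, hMiMδ, mul_smul_comm, mul_one]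
    have e2 : Mi * (M * M) = M - (δ : ℂ) • 1 + ((δ : ℂ) * (δ : ℂ)) • Mi := by
      rw [← mul_assoc, eMiM]
      rw [sub_mul, one_mul, smul_mul_assoc, eMiM]
      rw [smul_sub, smul_smul]
      abel
    have e3 : X.trace.re = M.trace.re - δ * d + (δ * δ) * Mi.trace.re := by
      rw [e1, e2]
      rw [Matrix.trace_add, Matrix.trace_sub, Matrix.trace_smul, Matrix.trace_smul,
        Matrix.trace_one]
      simp [Complex.add_re, Complex.sub_re, Complex.mul_re]
      try ring
    have hMitr : 0 ≤ Mi.trace.re := trace_re_nonneg hMi.posSemidef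
    rw [e3]
    nlinarith
  -- final assembly
  have key : 2 * (Real.sqrt p * Real.sqrt q) * X.trace.re ≤
      p * (ρ * Z⁻¹).trace.re + q * (σ * Z).trace.re := by
    have h1' := h1
    rw [h3, h6, h6'] at h1'
    linarith
  rw [Real.sqrt_mul hp q, hfid]
  have hnn : 0 ≤ 2 * (Real.sqrt p * Real.sqrt q) := by positivity
  calc 2 * (Real.sqrt p * Real.sqrt q) * (M.trace.re - δ * d)
      ≤ 2 * (Real.sqrt p * Real.sqrt q) * X.trace.re := mul_le_mul_of_nonneg_left h7 hnn
    _ ≤ p * (ρ * Z⁻¹).trace.re + q * (σ * Z).trace.re := key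

lemma side_b {P Q Y : Matrix (Fin d) (Fin d) ℂ} (hP : P.PosSemidef) (hQ : Q.PosSemidef)
    (hY : Y.PosDef) {η : ℝ} (hη : 0 < η) :
    ∃ Z : Matrix (Fin d) (Fin d) ℂ, Z.PosDef ∧
      (P * Z⁻¹).trace.re + (Q * Z).trace.re ≤
        Y.trace.re + (hP.sqrt * Q * hP.sqrt * Y⁻¹).trace.re
          + η * ((hP.sqrt * Q + Q * hP.sqrt) * Y⁻¹).trace.re + (η * η) * (Q * Y⁻¹).trace.re := by
  classical
  set SP := hP.sqrt with hSPdef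
  have hSPpsd : SP.PosSemidef := hP.posSemidef_sqrt
  have hSPh : SP.IsHermitian := hSPpsd.isHermitian
  have hSPSP : SP * SP = P := hP.sqrt_mul_self
  clear_value SP
  set Sη := SP + (η : ℂ) • 1 with hSηdef
  have hSη : Sη.PosDef := psd_add_csmul_one_pd hSPpsd hη
  have hSηh : Sη.IsHermitian := hSη.isHermitian
  have hSηdet : IsUnit Sη.det := hSη.det_pos.ne'.isUnit
  set Sηi := Sη⁻¹ with hSηidef
  have hSηi : Sηi.PosDef := hSη.inv
  have hSηih : Sηi.IsHermitian := hSηi.isHermitian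
  have hSηSηi : Sη * Sηi = 1 := Matrix.mul_nonsing_inv _ hSηdet
  have hSηiSη : Sηi * Sη = 1 := Matrix.nonsing_inv_mul _ hSηdet
  have hYdet : IsUnit Y.det := hY.det_pos.ne'.isUnit
  set Yi := Y⁻¹ with hYidef
  have hYi : Yi.PosDef := hY.inv
  have hYii : Yi⁻¹ = Y := Matrix.nonsing_inv_nonsing_inv _ hYdet
  refine ⟨Sη * Yi * Sη, ?_, ?_⟩
  · exact pd_of_psd_isUnit (psd_sand hSηh hYi.posSemidef)
      ((hSη.isUnit.mul hYi.isUnit).mul hSη.isUnit)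
  have hZi : (Sη * Yi * Sη)⁻¹ = Sηi * Y * Sηi := by
    rw [Matrix.mul_inv_rev, Matrix.mul_inv_rev, hYii, ← hSηidef, mul_assoc]
  -- part 1
  have part1 : (P * (Sη * Yi * Sη)⁻¹).trace.re ≤ Y.trace.re := by
    rw [hZi]
    have e : P * (Sηi * Y * Sηi) = (P * Sηi * Y) * Sηi := by noncomm_ring
    rw [e, Matrix.trace_mul_comm]
    have e2 : Sηi * (P * Sηi * Y) = (Sηi * P * Sηi) * Y := by noncomm_ring
    rw [e2]
    have hEE : (Sη * Sη - P).PosSemidef := by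
      have he : Sη * Sη - P = ((2*η : ℝ) : ℂ) • SP + ((η*η : ℝ) : ℂ) • 1 := by
        rw [hSηdef, ← hSPSP]
        push_cast
        rw [mul_add, add_mul, add_mul]
        simp only [smul_mul_assoc, mul_smul_comm, one_mul, mul_one, smul_smul]
        module
      rw [he, ← csmul_eq, ← csmul_eq]
      exact (smul_psd hSPpsd (by positivity)).add (smul_psd Matrix.PosSemidef.one (by positivity))
    have hR : (1 - Sηi * P * Sηi).PosSemidef := by
      have e3 : 1 - Sηi * P * Sηi = Sηi * (Sη * Sη - P) * Sηi := by
        have e4 : Sηi * (Sη * Sη) * Sηi = 1 := by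
          calc Sηi * (Sη * Sη) * Sηi = (Sηi * Sη) * (Sη * Sηi) := by noncomm_ring
          _ = 1 := by rw [hSηiSη, hSηSηi, one_mul]
        rw [← e4]
        noncomm_ring
      rw [e3]
      exact psd_sand hSηih hEE
    have := trace_mul_re_nonneg hR hY.posSemidef
    rw [sub_mul, one_mul, Matrix.trace_sub, Complex.sub_re] at this
    linarith
  -- part 2
  have part2 : (Q * (Sη * Yi * Sη)).trace.re
      = (SP * Q * SP * Yi).trace.re + η * ((SP * Q + Q * SP) * Yi).trace.re
        + (η * η) * (Q * Yi).trace.re := by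
    have e : Q * (Sη * Yi * Sη) = (Q * Sη * Yi) * Sη := by noncomm_ring
    rw [e, Matrix.trace_mul_comm]
    have e2 : Sη * (Q * Sη * Yi) = (Sη * Q * Sη) * Yi := by noncomm_ring
    rw [e2]
    have eQ : Sη * Q * Sη = SP * Q * SP + (η : ℂ) • (SP * Q + Q * SP)
        + ((η : ℂ) * (η : ℂ)) • Q := by
      rw [hSηdef, add_mul, add_mul, mul_add, mul_add]
      simp only [smul_mul_assoc, mul_smul_comm, one_mul, mul_one, smul_smul, smul_add]
      abel
    rw [eQ, add_mul, add_mul, Matrix.trace_add, Matrix.trace_add, smul_mul_assoc,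
      smul_mul_assoc, Matrix.trace_smul, Matrix.trace_smul, Complex.add_re, Complex.add_re]
    simp only [smul_eq_mul, ← Complex.ofReal_mul, re_cmul]
  linarith [part1, le_of_eq part2]

lemma psd_sum {n : ℕ} (f : Fin n → Matrix (Fin d) (Fin d) ℂ) (h : ∀ i, (f i).PosSemidef) :
    (∑ i, f i).PosSemidef :=
  Finset.sum_induction f (fun M => M.PosSemidef) (fun _ _ ha hb => ha.add hb)
    Matrix.PosSemidef.zero (fun i _ => h i)


end SJC

open SJC in
/-- Strong joint concavity of fidelity:
F(∑ p_i ρ_i, ∑ q_i σ_i) ≥ ∑ √(p_i q_i) F(ρ_i, σ_i). -/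
theorem strong_joint_concavity_of_fidelity
    (d n : ℕ) (hd : 1 ≤ d) (hn : 1 ≤ n)
    (ρ σ : Fin n → Matrix (Fin d) (Fin d) ℂ)
    (hρ : ∀ i, (ρ i).PosSemidef) (hσ : ∀ i, (σ i).PosSemidef)
    (hρtr : ∀ i, (ρ i).trace = 1) (hσtr : ∀ i, (σ i).trace = 1)
    (p q : Fin n → ℝ)
    (hp : ∀ i, 0 ≤ p i) (hq : ∀ i, 0 ≤ q i)
    (hps : ∑ i, p i = 1) (hqs : ∑ i, q i = 1) :
    ∑ i, Real.sqrt (p i * q i) * fid (ρ i) (σ i) ≤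
      fid (∑ i, p i • ρ i) (∑ i, q i • σ i) := by
  classical
  have hdR : (1 : ℝ) ≤ (d : ℝ) := by exact_mod_cast hd
  have hdR0 : (0 : ℝ) < (d : ℝ) := by linarith
  set P := ∑ i, p i • ρ i with hPdef
  set Q := ∑ i, q i • σ i with hQdef
  have hP : P.PosSemidef := psd_sum _ (fun i => smul_psd (hρ i) (hp i))
  have hQ : Q.PosSemidef := psd_sum _ (fun i => smul_psd (hσ i) (hq i))
  have hX0 : (hP.sqrt * Q * hP.sqrt).PosSemidef := psd_sand hP.posSemidef_sqrt.isHermitian hQ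
  set B0 := hX0.sqrt with hB0def
  have hB0psd : B0.PosSemidef := hX0.posSemidef_sqrt
  have hfidPQ : fid P Q = B0.trace.re := fid_eq hP hQ
  rw [hfidPQ]
  set S := ∑ i, Real.sqrt (p i * q i) * fid (ρ i) (σ i) with hSdef
  set T0 := ∑ i, Real.sqrt (p i * q i) with hT0def
  have hT0 : 0 ≤ T0 := Finset.sum_nonneg fun i _ => Real.sqrt_nonneg _
  -- Step A: for every positive definite Y
  have stepA : ∀ Y : Matrix (Fin d) (Fin d) ℂ, Y.PosDef →
      2 * S ≤ Y.trace.re + (hP.sqrt * Q * hP.sqrt * Y⁻¹).trace.re := by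
    intro Y hY
    refine le_of_forall_pos_le_add (fun ε hε => ?_)
    set c1 := ((hP.sqrt * Q + Q * hP.sqrt) * Y⁻¹).trace.re with hc1def
    set c2 := (Q * Y⁻¹).trace.re with hc2def
    set η := min 1 (ε / (2 * (|c1| + |c2| + 1))) with hηdef
    have hη : 0 < η := lt_min one_pos (by positivity)
    have hη1 : η ≤ 1 := min_le_left _ _
    have hη2 : η ≤ ε / (2 * (|c1| + |c2| + 1)) := min_le_right _ _
    obtain ⟨Z, hZ, hZle⟩ := side_b hP hQ hY hη
    set δ := ε / (2 * (2 * d * (T0 + 1))) with hδdef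
    have hδ : 0 < δ := by positivity
    -- sum the per-index inequalities
    have hPZ : (P * Z⁻¹).trace.re = ∑ i, p i * ((ρ i) * Z⁻¹).trace.re := by
      rw [hPdef, Finset.sum_mul, Matrix.trace_sum, Complex.re_sum]
      refine Finset.sum_congr rfl fun i _ => ?_
      rw [smul_mul_assoc, csmul_eq, Matrix.trace_smul, smul_eq_mul, re_cmul]
    have hQZ : (Q * Z).trace.re = ∑ i, q i * ((σ i) * Z).trace.re := by
      rw [hQdef, Finset.sum_mul, Matrix.trace_sum, Complex.re_sum]
      refine Finset.sum_congr rfl fun i _ => ?_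
      rw [smul_mul_assoc, csmul_eq, Matrix.trace_smul, smul_eq_mul, re_cmul]
    have hsum : 2 * S - 2 * (δ * d) * T0 ≤ (P * Z⁻¹).trace.re + (Q * Z).trace.re := by
      have hper : ∀ i, 2 * Real.sqrt (p i * q i) * (fid (ρ i) (σ i) - δ * d) ≤
          p i * ((ρ i) * Z⁻¹).trace.re + q i * ((σ i) * Z).trace.re :=
        fun i => per_i (hρ i) (hσ i) hZ (hp i) (hq i) hδ
      have hLHS : ∑ i, 2 * Real.sqrt (p i * q i) * (fid (ρ i) (σ i) - δ * d)
          = 2 * S - 2 * (δ * d) * T0 := by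
        rw [hSdef, hT0def, Finset.mul_sum, Finset.mul_sum, ← Finset.sum_sub_distrib]
        refine Finset.sum_congr rfl fun i _ => ?_
        ring
      rw [hPZ, hQZ, ← Finset.sum_add_distrib, ← hLHS]
      exact Finset.sum_le_sum fun i _ => hper i
    have hδbound : 2 * (δ * d) * T0 ≤ ε / 2 := by
      have hδK : δ * (2 * (2 * d * (T0 + 1))) = ε := by
        rw [hδdef]; field_simp
      nlinarith [hδ.le, hT0, hdR0.le]
    have hηbound : η * c1 + (η * η) * c2 ≤ ε / 2 := by
      have e1 : η * c1 ≤ η * |c1| := mul_le_mul_of_nonneg_left (le_abs_self _) hη.le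
      have e2 : (η * η) * c2 ≤ (η * η) * |c2| :=
        mul_le_mul_of_nonneg_left (le_abs_self _) (by positivity)
      have hηη : η * η ≤ η := by nlinarith [mul_nonneg (sub_nonneg.mpr hη1) hη.le]
      have e3 : (η * η) * |c2| ≤ η * |c2| := mul_le_mul_of_nonneg_right hηη (abs_nonneg c2)
      have e4 : η * (|c1| + |c2| + 1) ≤ ε / 2 := by
        have h2 : 0 < |c1| + |c2| + 1 := by positivity
        calc η * (|c1| + |c2| + 1) ≤ (ε / (2 * (|c1| + |c2| + 1))) * (|c1| + |c2| + 1) :=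
              mul_le_mul_of_nonneg_right hη2 h2.le
        _ = ε / 2 := by field_simp
      nlinarith [hη.le, abs_nonneg c1, abs_nonneg c2]
    linarith [hZle, hsum]
  -- Step B
  have stepB : S ≤ B0.trace.re := by
    refine le_of_forall_pos_le_add (fun ε hε => ?_)
    have hεd : 0 < ε / d := by positivity
    set Y := B0 + ((ε / d : ℝ) : ℂ) • (1 : Matrix (Fin d) (Fin d) ℂ) with hYdef
    have hY : Y.PosDef := psd_add_csmul_one_pd hB0psd hεd
    have hYdet : IsUnit Y.det := hY.det_pos.ne'.isUnit
    have hYY : Y * Y⁻¹ = 1 := Matrix.mul_nonsing_inv _ hYdet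
    have b1 : Y.trace.re = B0.trace.re + ε := by
      rw [hYdef, Matrix.trace_add, Matrix.trace_smul, Matrix.trace_one, Complex.add_re,
        smul_eq_mul, re_cmul]
      have : (ε / d) * ((d : ℂ) : ℂ).re = ε := by
        simp only [Complex.natCast_re]
        field_simp
      simp only [Complex.natCast_re]
      field_simp
      simp only [Fintype.card_fin]; ring
    have eX0 : hP.sqrt * Q * hP.sqrt * Y⁻¹ = B0 - ((ε / d : ℝ) : ℂ) • (B0 * Y⁻¹) := by
      have e0 : hP.sqrt * Q * hP.sqrt = B0 * B0 := hX0.sqrt_mul_self.symm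
      have e1 : B0 = Y - ((ε / d : ℝ) : ℂ) • 1 := by rw [hYdef]; abel
      calc hP.sqrt * Q * hP.sqrt * Y⁻¹ = B0 * ((Y - ((ε / d : ℝ) : ℂ) • 1) * Y⁻¹) := by
            rw [e0, ← e1]; noncomm_ring
      _ = B0 * (1 - ((ε / d : ℝ) : ℂ) • Y⁻¹) := by
            rw [sub_mul, hYY, smul_mul_assoc, one_mul]
      _ = B0 - ((ε / d : ℝ) : ℂ) • (B0 * Y⁻¹) := by
            rw [mul_sub, mul_one, mul_smul_comm]
    have b2 : (hP.sqrt * Q * hP.sqrt * Y⁻¹).trace.re ≤ B0.trace.re := by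
      rw [eX0, Matrix.trace_sub, Matrix.trace_smul, Complex.sub_re, smul_eq_mul, re_cmul]
      have := trace_mul_re_nonneg hB0psd hY.inv.posSemidef
      nlinarith [hεd.le]
    have hA := stepA Y hY
    linarith [b1, b2, hA]
  exact stepB
end

section
/- Joint concavity of fidelity (special case of Theorem 1 with equal weights): Let d ≥ 1 and n ≥ 1. Let (ρ_i)_{i=1}^n and (σ_i)_{i=1}^n be density matrices on ℂ^d and let (p_i)_{i=1}^n be a probability distribution (p_i ≥ 0, ∑_i p_i = 1). Then F(∑_i p_i ρ_i, ∑_i p_i σ_i) ≥ ∑_i p_i · F(ρ_i, σ_i). -/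
open Matrix
open scoped ComplexOrder

section Helpers

variable {d n : ℕ} {m : Type*} [Fintype m] [DecidableEq m]

lemma msqrt_eq {A : Matrix (Fin d) (Fin d) ℂ} (h : A.PosSemidef) : msqrt A =
    h.1.eigenvectorUnitary.1 * diagonal ((↑) ∘ (√·) ∘ h.1.eigenvalues) *
      (star h.1.eigenvectorUnitary : Matrix (Fin d) (Fin d) ℂ) := by
  rw [msqrt, dif_pos h]

lemma msqrt_posSemidef {A : Matrix (Fin d) (Fin d) ℂ} (h : A.PosSemidef) :
    (msqrt A).PosSemidef := by
  rw [msqrt_eq h]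
  have hs : (star h.1.eigenvectorUnitary : Matrix (Fin d) (Fin d) ℂ)
      = (h.1.eigenvectorUnitary.1)ᴴ := rfl
  rw [hs]
  refine (posSemidef_diagonal_iff.mpr fun i => ?_).mul_mul_conjTranspose_same _
  exact Complex.zero_le_real.mpr (Real.sqrt_nonneg _)

lemma msqrt_mul_self {A : Matrix (Fin d) (Fin d) ℂ} (h : A.PosSemidef) :
    msqrt A * msqrt A = A := by
  rw [msqrt_eq h]
  have hUU : (star h.1.eigenvectorUnitary : Matrix (Fin d) (Fin d) ℂ) * h.1.eigenvectorUnitary.1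
      = 1 := (Matrix.mem_unitaryGroup_iff').mp h.1.eigenvectorUnitary.2
  set U := h.1.eigenvectorUnitary
  set D : Matrix (Fin d) (Fin d) ℂ := diagonal ((↑) ∘ (√·) ∘ h.1.eigenvalues) with hD
  rw [show U.1 * D * (star U : Matrix (Fin d) (Fin d) ℂ) * (U.1 * D * (star U : Matrix (Fin d) (Fin d) ℂ))
      = U.1 * D * ((star U : Matrix (Fin d) (Fin d) ℂ) * U.1) * D * (star U : Matrix (Fin d) (Fin d) ℂ) by
        simp only [Matrix.mul_assoc], hUU, Matrix.mul_one, Matrix.mul_assoc U.1 D D, hD, diagonal_mul_diagonal]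
  conv_rhs => rw [h.1.spectral_theorem, Unitary.conjStarAlgAut_apply]
  congr 3
  funext i
  simp only [Function.comp_apply, ← Complex.ofReal_mul, Real.mul_self_sqrt (h.eigenvalues_nonneg i)]
  rfl

lemma msqrt_herm {A : Matrix (Fin d) (Fin d) ℂ} (h : A.PosSemidef) :
    (msqrt A)ᴴ = msqrt A := (msqrt_posSemidef h).1

/-- pseudo-inverse package for a Hermitian matrix -/
lemma exists_pinv {B : Matrix (Fin d) (Fin d) ℂ} (hH : B.IsHermitian) :
    ∃ C Q : Matrix (Fin d) (Fin d) ℂ, Cᴴ = C ∧ Qᴴ = Q ∧ Q * Q = Q ∧ B * C = Q ∧ C * B = Q ∧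
      Q * B = B ∧ B * Q = B ∧ C * Q = C ∧ Q * C = C := by
  classical
  set U : Matrix (Fin d) (Fin d) ℂ := (hH.eigenvectorUnitary : Matrix (Fin d) (Fin d) ℂ) with hU
  have hUU : star U * U = 1 := (Matrix.mem_unitaryGroup_iff').mp hH.eigenvectorUnitary.2
  set e : Fin d → ℝ := hH.eigenvalues with he
  set T : (Fin d → ℝ) → Matrix (Fin d) (Fin d) ℂ :=
    fun f => U * diagonal (Complex.ofReal ∘ f) * star U with hT
  have key : ∀ f g : Fin d → ℝ, T f * T g = T (fun i => f i * g i) := by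
    intro f g
    have hfun : (fun i => (Complex.ofReal ∘ f) i * (Complex.ofReal ∘ g) i)
        = Complex.ofReal ∘ (fun i => f i * g i) := by funext i; simp
    have h1 : star U * (U * (diagonal (Complex.ofReal ∘ g) * star U))
        = diagonal (Complex.ofReal ∘ g) * star U := by
      rw [← mul_assoc, hUU, one_mul]
    simp only [hT, mul_assoc, h1]
    rw [← mul_assoc (diagonal (Complex.ofReal ∘ f)) (diagonal (Complex.ofReal ∘ g)),
      diagonal_mul_diagonal, hfun]
  have hext : ∀ f g : Fin d → ℝ, (∀ i, f i = g i) → T f = T g := by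
    intro f g h; rw [show f = g from funext h]
  have hherm : ∀ f, (T f)ᴴ = T f := by
    intro f
    have hD : (diagonal (Complex.ofReal ∘ f))ᴴ = diagonal (Complex.ofReal ∘ f) := by
      rw [diagonal_conjTranspose]
      have : star (Complex.ofReal ∘ f) = Complex.ofReal ∘ f := by
        funext i; simp [Complex.conj_ofReal]
      rw [this]
    simp only [hT, conjTranspose_mul, hD, star_eq_conjTranspose, conjTranspose_conjTranspose,
      mul_assoc]
  have hTB : T e = B := hH.spectral_theorem.symm
  refine ⟨T e⁻¹, T (fun i => e i * (e i)⁻¹), hherm _, hherm _, ?_, ?_, ?_, ?_, ?_, ?_, ?_⟩ <;>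
      (try rw [← hTB]) <;> rw [key] <;>
      refine hext _ _ (fun i => ?_) <;>
      rcases eq_or_ne (e i) 0 with h | h <;>
      simp [Pi.inv_apply, h, mul_inv_cancel₀, inv_mul_cancel₀]

lemma proj_one_sub_psd {k : Type*} [Fintype k] [DecidableEq k] {Q : Matrix k k ℂ}
    (hQh : Qᴴ = Q) (hQ2 : Q * Q = Q) :
    ((1 : Matrix k k ℂ) - Q).PosSemidef := by
  have h : ((1 : Matrix k k ℂ) - Q)ᴴ * (1 - Q) = 1 - Q := by
    rw [conjTranspose_sub, conjTranspose_one, hQh, mul_sub, sub_mul, sub_mul, hQ2]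
    simp
  rw [← h]
  exact posSemidef_conjTranspose_mul_self _

lemma trace_re_nonneg {k : Type*} [Fintype k] [DecidableEq k] {A : Matrix k k ℂ}
    (hA : A.PosSemidef) : 0 ≤ A.trace.re := by
  have h : ∀ i, 0 ≤ (A i i).re := by
    intro i
    have h0 := hA.re_dotProduct_nonneg (Pi.single i 1)
    have h1 : star (Pi.single i 1 : k → ℂ) ⬝ᵥ (A *ᵥ Pi.single i 1) = A i i := by
      simp [mulVec_single, dotProduct, Pi.single_apply, apply_ite, Finset.sum_ite_eq]
    rwa [h1] at h0
  rw [trace]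
  simp only [Complex.re_sum, diag_apply]
  exact Finset.sum_nonneg fun i _ => h i

lemma trace_re_mono {k : Type*} [Fintype k] [DecidableEq k] {A B : Matrix k k ℂ}
    (h : (A - B).PosSemidef) : B.trace.re ≤ A.trace.re := by
  have := trace_re_nonneg h
  rw [trace_sub, Complex.sub_re] at this
  linarith

lemma trace_mul_conjTranspose_self_re (Z : Matrix (Fin d) m ℂ) :
    (trace (Z * Zᴴ)).re = ∑ a, ∑ b, Complex.normSq (Z a b) := by
  have h : trace (Z * Zᴴ) = ∑ a, ∑ b, (Complex.normSq (Z a b) : ℂ) := by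
    simp [trace, mul_apply, diag, conjTranspose_apply, Complex.mul_conj]
  rw [h]
  simp [Complex.re_sum]

lemma eq_zero_of_trace_re_nonpos {Z : Matrix (Fin d) m ℂ}
    (h : (trace (Z * Zᴴ)).re ≤ 0) : Z = 0 := by
  rw [trace_mul_conjTranspose_self_re] at h
  have hz : ∀ a ∈ Finset.univ, ∀ b ∈ Finset.univ, Complex.normSq (Z a b) = 0 := by
    have h1 : ∀ a ∈ (Finset.univ : Finset (Fin d)),
        0 ≤ ∑ b, Complex.normSq (Z a b) :=
      fun a _ => Finset.sum_nonneg fun b _ => Complex.normSq_nonneg _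
    have h2 := (Finset.sum_eq_zero_iff_of_nonneg h1).mp
      (le_antisymm h (Finset.sum_nonneg h1))
    intro a ha b hb
    exact (Finset.sum_eq_zero_iff_of_nonneg
      (fun b _ => Complex.normSq_nonneg (Z a b))).mp (h2 a ha) b hb
  ext a b
  simpa using Complex.normSq_eq_zero.mp (hz a (Finset.mem_univ a) b (Finset.mem_univ b))

lemma abs_trace_le_sqrt (A B : Matrix (Fin d) (Fin d) ℂ) :
    ‖(Aᴴ * B).trace‖ ≤
      Real.sqrt ((Aᴴ * A).trace.re) * Real.sqrt ((Bᴴ * B).trace.re) := by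
  let v : EuclideanSpace ℂ (Fin d × Fin d) := WithLp.toLp 2 (fun q => A q.1 q.2)
  let w : EuclideanSpace ℂ (Fin d × Fin d) := WithLp.toLp 2 (fun q => B q.1 q.2)
  have key : ∀ A B : Matrix (Fin d) (Fin d) ℂ,
      (@inner ℂ (EuclideanSpace ℂ (Fin d × Fin d)) _
        (WithLp.toLp 2 (fun q => A q.1 q.2)) (WithLp.toLp 2 (fun q => B q.1 q.2)))
        = (Aᴴ * B).trace := by
    intro A B
    simp only [PiLp.inner_apply, PiLp.toLp_apply, RCLike.inner_apply, trace, diag_apply, mul_apply,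
      conjTranspose_apply]
    rw [Fintype.sum_prod_type, Finset.sum_comm]
    set_option maxRecDepth 10000 in
    simp only [starRingEnd_apply]
    exact Finset.sum_congr rfl fun _ _ => Finset.sum_congr rfl fun _ _ => mul_comm _ _
  have hvw : (inner ℂ v w) = (Aᴴ * B).trace := key A B
  have hvv : (inner ℂ v v) = ((Aᴴ * A).trace : ℂ) := key A A
  have hww : (inner ℂ w w) = ((Bᴴ * B).trace : ℂ) := key B B
  have hnv : ‖v‖ = Real.sqrt ((Aᴴ * A).trace.re) := by
    rw [norm_eq_sqrt_re_inner (𝕜 := ℂ), hvv]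
    simp
  have hnw : ‖w‖ = Real.sqrt ((Bᴴ * B).trace.re) := by
    rw [norm_eq_sqrt_re_inner (𝕜 := ℂ), hww]
    simp
  calc ‖(Aᴴ * B).trace‖ = ‖inner ℂ v w‖ := by
        rw [hvw]
    _ ≤ ‖v‖ * ‖w‖ := norm_inner_le_norm v w
    _ = _ := by rw [hnv, hnw]

/-- polar decomposition package -/
lemma polar (N : Matrix (Fin d) (Fin d) ℂ) :
    ∃ V : Matrix (Fin d) (Fin d) ℂ,
      V * msqrt (Nᴴ * N) = N ∧ Vᴴ * N = msqrt (Nᴴ * N) ∧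
      ((1 : Matrix (Fin d) (Fin d) ℂ) - Vᴴ * V).PosSemidef ∧
      ((1 : Matrix (Fin d) (Fin d) ℂ) - V * Vᴴ).PosSemidef := by
  have hNN : (Nᴴ * N).PosSemidef := posSemidef_conjTranspose_mul_self N
  set B := msqrt (Nᴴ * N) with hB
  have hBpsd : B.PosSemidef := msqrt_posSemidef hNN
  have hB2 : B * B = Nᴴ * N := msqrt_mul_self hNN
  have hBh : Bᴴ = B := msqrt_herm hNN
  obtain ⟨C, Q, hCh, hQh, hQQ, hBC, hCB, hQB, hBQ, hCQ, hQC⟩ := exists_pinv hBpsd.1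
  have hNQ : N * Q = N := by
    have h2 : B * (1 - Q) = 0 := by rw [mul_sub, mul_one, hBQ, sub_self]
    have h3 : (N * (1 - Q))ᴴ * (N * (1 - Q)) = (B * (1 - Q))ᴴ * (B * (1 - Q)) := by
      simp only [conjTranspose_mul, hBh, Matrix.mul_assoc]
      rw [← Matrix.mul_assoc Nᴴ N, ← hB2, Matrix.mul_assoc]
    rw [h2] at h3
    simp only [conjTranspose_zero, mul_zero] at h3
    have h4 : N * (1 - Q) = 0 := conjTranspose_mul_self_eq_zero.mp h3
    rw [mul_sub, mul_one, sub_eq_zero] at h4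
    exact h4.symm
  have hVV : (N * C)ᴴ * (N * C) = Q := by
    calc (N * C)ᴴ * (N * C) = C * (Nᴴ * N * C) := by
          rw [conjTranspose_mul, hCh, Matrix.mul_assoc, Matrix.mul_assoc]
      _ = (C * B) * (B * C) := by rw [← hB2]; simp only [Matrix.mul_assoc]
      _ = Q := by rw [hCB, hBC, hQQ]
  refine ⟨N * C, ?_, ?_, ?_, ?_⟩
  · rw [Matrix.mul_assoc, hCB, hNQ]
  · rw [conjTranspose_mul, hCh, Matrix.mul_assoc, ← hB2, ← Matrix.mul_assoc, hCB, hQB]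
  · rw [hVV]; exact proj_one_sub_psd hQh hQQ
  · have hL : ((N * C) * (N * C)ᴴ)ᴴ = (N * C) * (N * C)ᴴ := by
      simp only [conjTranspose_mul, conjTranspose_conjTranspose, Matrix.mul_assoc]
    have hL2 : ((N * C) * (N * C)ᴴ) * ((N * C) * (N * C)ᴴ) = (N * C) * (N * C)ᴴ := by
      calc ((N * C) * (N * C)ᴴ) * ((N * C) * (N * C)ᴴ)
          = (N * C) * (((N * C)ᴴ * (N * C)) * (N * C)ᴴ) := by simp only [Matrix.mul_assoc]
        _ = (N * (C * Q)) * (N * C)ᴴ := by rw [hVV]; simp only [Matrix.mul_assoc]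
        _ = (N * C) * (N * C)ᴴ := by rw [hCQ]
    exact proj_one_sub_psd hL hL2

/-- factorization through msqrt, inequality version -/
lemma factor {B : Matrix (Fin d) (Fin d) ℂ} (hB : B.IsHermitian) (Y : Matrix (Fin d) m ℂ)
    (hle : (B * B - Y * Yᴴ).PosSemidef) :
    ∃ W : Matrix (Fin d) m ℂ, B * W = Y ∧
      ((1 : Matrix (Fin d) (Fin d) ℂ) - W * Wᴴ).PosSemidef := by
  obtain ⟨C, Q, hCh, hQh, hQQ, hBC, hCB, hQB, hBQ, hCQ, hQC⟩ := exists_pinv hB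
  have h1Qh : ((1 : Matrix (Fin d) (Fin d) ℂ) - Q)ᴴ = 1 - Q := by
    rw [conjTranspose_sub, conjTranspose_one, hQh]
  have hQB0 : ((1 : Matrix (Fin d) (Fin d) ℂ) - Q) * B = 0 := by
    rw [sub_mul, one_mul, hQB, sub_self]
  have hQY : Q * Y = Y := by
    have hpsd : ((1 - Q) * (B * B - Y * Yᴴ) * (1 - Q)ᴴ).PosSemidef :=
      hle.mul_mul_conjTranspose_same (1 - Q)
    have e1 : ((1 : Matrix (Fin d) (Fin d) ℂ) - Q) * (B * B) * (1 - Q) = 0 := by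
      calc (1 - Q) * (B * B) * (1 - Q) = ((1 - Q) * B) * (B * (1 - Q)) := by
            simp only [Matrix.mul_assoc]
        _ = 0 := by rw [hQB0, zero_mul]
    have e2 : ((1 - Q) * Y) * ((1 - Q) * Y)ᴴ = (1 - Q) * (Y * Yᴴ) * (1 - Q) := by
      rw [conjTranspose_mul, h1Qh]; simp only [Matrix.mul_assoc]
    have hexp : (1 - Q) * (B * B - Y * Yᴴ) * (1 - Q)ᴴ
        = - (((1 - Q) * Y) * ((1 - Q) * Y)ᴴ) := by
      calc (1 - Q) * (B * B - Y * Yᴴ) * (1 - Q)ᴴ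
          = (1 - Q) * (B * B) * (1 - Q) - (1 - Q) * (Y * Yᴴ) * (1 - Q) := by
            rw [h1Qh]; noncomm_ring
        _ = - (((1 - Q) * Y) * ((1 - Q) * Y)ᴴ) := by rw [e1, e2, zero_sub]
    rw [hexp] at hpsd
    have htr : (trace (((1 - Q) * Y) * ((1 - Q) * Y)ᴴ)).re ≤ 0 := by
      have := trace_re_nonneg hpsd
      rw [trace_neg, Complex.neg_re] at this
      linarith
    have hZ0 : (1 - Q) * Y = 0 := eq_zero_of_trace_re_nonpos htr
    rw [Matrix.sub_mul, Matrix.one_mul, sub_eq_zero] at hZ0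
    exact hZ0.symm
  refine ⟨C * Y, ?_, ?_⟩
  · rw [← Matrix.mul_assoc, hBC, hQY]
  · have hcbc : C * (B * B) * C = Q := by
      calc C * (B * B) * C = (C * B) * (B * C) := by simp only [Matrix.mul_assoc]
        _ = Q := by rw [hCB, hBC, hQQ]
    have hL : (C * Y) * (C * Y)ᴴ = C * (Y * Yᴴ) * C := by
      rw [conjTranspose_mul, hCh]; simp only [Matrix.mul_assoc]
    have hexp : (1 : Matrix (Fin d) (Fin d) ℂ) - (C * Y) * (C * Y)ᴴ
        = (1 - Q) + C * (B * B - Y * Yᴴ) * Cᴴ := by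
      rw [hCh, mul_sub, sub_mul, hcbc, hL]
      abel
    rw [hexp]
    exact (proj_one_sub_psd hQh hQQ).add (hle.mul_mul_conjTranspose_same C)

/-- factorization through msqrt, equality version -/
lemma factor_eq {B : Matrix (Fin d) (Fin d) ℂ} (hB : B.IsHermitian) (X : Matrix (Fin d) m ℂ)
    (heq : X * Xᴴ = B * B) :
    ∃ U : Matrix (Fin d) m ℂ, B * U = X ∧
      ((1 : Matrix m m ℂ) - Uᴴ * U).PosSemidef := by
  obtain ⟨C, Q, hCh, hQh, hQQ, hBC, hCB, hQB, hBQ, hCQ, hQC⟩ := exists_pinv hB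
  have h1Qh : ((1 : Matrix (Fin d) (Fin d) ℂ) - Q)ᴴ = 1 - Q := by
    rw [conjTranspose_sub, conjTranspose_one, hQh]
  have hQB0 : ((1 : Matrix (Fin d) (Fin d) ℂ) - Q) * B = 0 := by
    rw [sub_mul, one_mul, hQB, sub_self]
  have hQX : Q * X = X := by
    have hzz : ((1 - Q) * X) * ((1 - Q) * X)ᴴ = 0 := by
      rw [conjTranspose_mul, h1Qh]
      calc (1 - Q) * X * (Xᴴ * (1 - Q)) = (1 - Q) * (X * Xᴴ) * (1 - Q) := by
            simp only [Matrix.mul_assoc]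
        _ = ((1 - Q) * B) * (B * (1 - Q)) := by rw [heq]; simp only [Matrix.mul_assoc]
        _ = 0 := by rw [hQB0, zero_mul]
    have hZ0 : ((1 : Matrix (Fin d) (Fin d) ℂ) - Q) * X = 0 :=
      self_mul_conjTranspose_eq_zero.mp hzz
    rw [Matrix.sub_mul, Matrix.one_mul, sub_eq_zero] at hZ0
    exact hZ0.symm
  have hcbc : C * (B * B) * C = Q := by
    calc C * (B * B) * C = (C * B) * (B * C) := by simp only [Matrix.mul_assoc]
      _ = Q := by rw [hCB, hBC, hQQ]
  have hUUh : C * X * (C * X)ᴴ = Q := by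
    rw [conjTranspose_mul, hCh]
    calc C * X * (Xᴴ * C) = C * (X * Xᴴ) * C := by simp only [Matrix.mul_assoc]
      _ = Q := by rw [heq, hcbc]
  refine ⟨C * X, ?_, ?_⟩
  · rw [← Matrix.mul_assoc, hBC, hQX]
  · set L := C * X with hLdef
    have hQL : Q * L = L := by rw [hLdef, ← Matrix.mul_assoc, hQC]
    have hLh : (Lᴴ * L)ᴴ = Lᴴ * L := by
      rw [conjTranspose_mul, conjTranspose_conjTranspose]
    have hL2 : (Lᴴ * L) * (Lᴴ * L) = Lᴴ * L := by
      calc (Lᴴ * L) * (Lᴴ * L) = Lᴴ * ((L * Lᴴ) * L) := by simp only [Matrix.mul_assoc]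
        _ = Lᴴ * L := by rw [hUUh, hQL]
    exact proj_one_sub_psd hLh hL2

/-- key trace-norm duality inequality -/
lemma trace_contraction_le (M C0 : Matrix (Fin d) (Fin d) ℂ)
    (hC : ((1 : Matrix (Fin d) (Fin d) ℂ) - C0ᴴ * C0).PosSemidef) :
    (trace (M * C0)).re ≤ (trace (msqrt (Mᴴ * M))).re := by
  have hNN : (Mᴴ * M).PosSemidef := posSemidef_conjTranspose_mul_self M
  set B := msqrt (Mᴴ * M) with hB
  have hBpsd : B.PosSemidef := msqrt_posSemidef hNN
  obtain ⟨V, hVB, -, hVV, -⟩ := polar M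
  rw [← hB] at hVB
  set T := msqrt B with hT
  have hTpsd : T.PosSemidef := msqrt_posSemidef hBpsd
  have hT2 : T * T = B := msqrt_mul_self hBpsd
  have hTh : Tᴴ = T := msqrt_herm hBpsd
  set Z := C0 * (V * T) with hZdef
  have h1 : trace (M * C0) = trace (Tᴴ * Z) := by
    calc trace (M * C0) = trace ((V * T) * (T * C0)) := by
          rw [← hVB, ← hT2]; simp only [Matrix.mul_assoc]
      _ = trace ((T * C0) * (V * T)) := trace_mul_comm _ _
      _ = trace (Tᴴ * Z) := by rw [hTh, hZdef]; simp only [Matrix.mul_assoc]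
  have hTT : Tᴴ * T = B := by rw [hTh, hT2]
  have hBtr : 0 ≤ B.trace.re := trace_re_nonneg hBpsd
  have hmono1 : ((Zᴴ * Z).trace).re ≤ (((V * T)ᴴ * (V * T)).trace).re := by
    apply trace_re_mono
    have hpsd := hC.conjTranspose_mul_mul_same (V * T)
    have hexp : (V * T)ᴴ * ((1 : Matrix (Fin d) (Fin d) ℂ) - C0ᴴ * C0) * (V * T)
        = (V * T)ᴴ * (V * T) - Zᴴ * Z := by
      rw [hZdef, mul_sub, sub_mul, mul_one]
      simp only [conjTranspose_mul, Matrix.mul_assoc]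
    rwa [hexp] at hpsd
  have hmono2 : (((V * T)ᴴ * (V * T)).trace).re ≤ B.trace.re := by
    rw [← hTT]
    apply trace_re_mono
    have hpsd := hVV.conjTranspose_mul_mul_same T
    have hexp : Tᴴ * ((1 : Matrix (Fin d) (Fin d) ℂ) - Vᴴ * V) * T
        = Tᴴ * T - (V * T)ᴴ * (V * T) := by
      rw [mul_sub, sub_mul, mul_one]
      simp only [conjTranspose_mul, Matrix.mul_assoc]
    rwa [hexp] at hpsd
  have habs := abs_trace_le_sqrt T Z
  rw [hTT] at habs
  have hfin : ‖(Tᴴ * Z).trace‖ ≤ B.trace.re := by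
    calc ‖(Tᴴ * Z).trace‖
        ≤ Real.sqrt (B.trace.re) * Real.sqrt (((Zᴴ * Z).trace).re) := habs
      _ ≤ Real.sqrt (B.trace.re) * Real.sqrt (B.trace.re) := by
          apply mul_le_mul_of_nonneg_left _ (Real.sqrt_nonneg _)
          exact Real.sqrt_le_sqrt (le_trans hmono1 hmono2)
      _ = B.trace.re := Real.mul_self_sqrt hBtr
  calc (trace (M * C0)).re = ((Tᴴ * Z).trace).re := by rw [h1]
    _ ≤ ‖(Tᴴ * Z).trace‖ := Complex.re_le_norm _
    _ ≤ B.trace.re := hfin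

lemma blocks_mul_conjTranspose (c : Fin n → ℝ) (hc : ∀ i, 0 ≤ c i)
    (A : Fin n → Matrix (Fin d) (Fin d) ℂ) :
    (Matrix.of fun a (q : Fin n × Fin d) => (Real.sqrt (c q.1) : ℂ) * A q.1 a q.2) *
      (Matrix.of fun a (q : Fin n × Fin d) => (Real.sqrt (c q.1) : ℂ) * A q.1 a q.2)ᴴ
      = ∑ i, c i • (A i * (A i)ᴴ) := by
  ext a b
  simp only [mul_apply, conjTranspose_apply, of_apply, Fintype.sum_prod_type,
    Matrix.sum_apply, Matrix.smul_apply, star_mul', Complex.star_def, Complex.conj_ofReal]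
  refine Finset.sum_congr rfl fun i _ => ?_
  have hs : (Real.sqrt (c i) : ℂ) * Real.sqrt (c i) = (c i : ℂ) := by
    rw [← Complex.ofReal_mul, Real.mul_self_sqrt (hc i)]
  rw [Complex.real_smul, Finset.mul_sum]
  refine Finset.sum_congr rfl fun x _ => ?_
  rw [← hs]; ring

lemma trace_blocks (c : Fin n → ℝ) (hc : ∀ i, 0 ≤ c i)
    (A B : Fin n → Matrix (Fin d) (Fin d) ℂ) :
    trace ((Matrix.of fun a (q : Fin n × Fin d) => (Real.sqrt (c q.1) : ℂ) * A q.1 a q.2)ᴴ *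
        (Matrix.of fun a (q : Fin n × Fin d) => (Real.sqrt (c q.1) : ℂ) * B q.1 a q.2))
      = ∑ i, (c i : ℂ) * trace ((A i)ᴴ * B i) := by
  simp only [trace, diag_apply, mul_apply, conjTranspose_apply, of_apply,
    Fintype.sum_prod_type, Complex.star_def, star_mul', Complex.conj_ofReal]
  refine Finset.sum_congr rfl fun i _ => ?_
  have hs : (Real.sqrt (c i) : ℂ) * Real.sqrt (c i) = (c i : ℂ) := by
    rw [← Complex.ofReal_mul, Real.mul_self_sqrt (hc i)]
  rw [Finset.mul_sum]
  refine Finset.sum_congr rfl fun a _ => ?_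
  rw [Finset.mul_sum]
  refine Finset.sum_congr rfl fun x _ => ?_
  rw [← hs]; ring

lemma psd_smul {k : Type*} [Fintype k] [DecidableEq k] {A : Matrix k k ℂ}
    (hA : A.PosSemidef) {r : ℝ} (hr : 0 ≤ r) : (r • A).PosSemidef := by
  constructor
  · unfold Matrix.IsHermitian
    rw [conjTranspose_smul, hA.1.eq, star_trivial]
  · exact (hA.smul hr).2

lemma fid_eq {ρ σ : Matrix (Fin d) (Fin d) ℂ} (hρ : ρ.PosSemidef) (hσ : σ.PosSemidef) :
    fid ρ σ = ((msqrt ((msqrt σ * msqrt ρ)ᴴ * (msqrt σ * msqrt ρ))).trace).re := by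
  have h : (msqrt σ * msqrt ρ)ᴴ * (msqrt σ * msqrt ρ) = msqrt ρ * σ * msqrt ρ := by
    rw [conjTranspose_mul, msqrt_herm hρ, msqrt_herm hσ]
    calc msqrt ρ * msqrt σ * (msqrt σ * msqrt ρ)
        = msqrt ρ * (msqrt σ * msqrt σ) * msqrt ρ := by simp only [Matrix.mul_assoc]
      _ = msqrt ρ * σ * msqrt ρ := by rw [msqrt_mul_self hσ]
  unfold fid
  rw [h]

end Helpers

/-- Joint concavity of fidelity:
F(∑ p_i ρ_i, ∑ p_i σ_i) ≥ ∑ p_i F(ρ_i, σ_i). -/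
theorem joint_concavity_of_fidelity
    (d n : ℕ) (hd : 1 ≤ d) (hn : 1 ≤ n)
    (ρ σ : Fin n → Matrix (Fin d) (Fin d) ℂ)
    (hρ : ∀ i, (ρ i).PosSemidef) (hσ : ∀ i, (σ i).PosSemidef)
    (hρtr : ∀ i, (ρ i).trace = 1) (hσtr : ∀ i, (σ i).trace = 1)
    (p : Fin n → ℝ) (hp : ∀ i, 0 ≤ p i) (hps : ∑ i, p i = 1) :
    ∑ i, p i * fid (ρ i) (σ i) ≤ fid (∑ i, p i • ρ i) (∑ i, p i • σ i) := by
  classical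
  set R := ∑ i, p i • ρ i with hRdef
  set S := ∑ i, p i • σ i with hSdef
  have hR : R.PosSemidef := by
    rw [hRdef]
    exact Finset.sum_induction _ _ (fun a b ha hb => ha.add hb) Matrix.PosSemidef.zero
      (fun i _ => psd_smul (hρ i) (hp i))
  have hS : S.PosSemidef := by
    rw [hSdef]
    exact Finset.sum_induction _ _ (fun a b ha hb => ha.add hb) Matrix.PosSemidef.zero
      (fun i _ => psd_smul (hσ i) (hp i))
  choose V hV1 hV2 hV3 hV4 using fun i => polar (msqrt (σ i) * msqrt (ρ i))
  set A₁ : Fin n → Matrix (Fin d) (Fin d) ℂ := fun i => msqrt (ρ i) with hA₁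
  set A₂ : Fin n → Matrix (Fin d) (Fin d) ℂ := fun i => msqrt (σ i) * V i with hA₂
  set X : Matrix (Fin d) (Fin n × Fin d) ℂ :=
    Matrix.of fun a q => (Real.sqrt (p q.1) : ℂ) * A₁ q.1 a q.2 with hXdef
  set Y : Matrix (Fin d) (Fin n × Fin d) ℂ :=
    Matrix.of fun a q => (Real.sqrt (p q.1) : ℂ) * A₂ q.1 a q.2 with hYdef
  -- X Xᴴ = R
  have hXX : X * Xᴴ = R := by
    rw [hXdef, blocks_mul_conjTranspose p hp A₁, hRdef]
    refine Finset.sum_congr rfl fun i _ => ?_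
    rw [hA₁]
    rw [msqrt_herm (hρ i), msqrt_mul_self (hρ i)]
  -- S - Y Yᴴ is PSD
  have hSY : (S - Y * Yᴴ).PosSemidef := by
    rw [hYdef, blocks_mul_conjTranspose p hp A₂, hSdef, ← Finset.sum_sub_distrib]
    refine Finset.sum_induction _ _ (fun a b ha hb => ha.add hb) Matrix.PosSemidef.zero
      (fun i _ => ?_)
    rw [← smul_sub]
    refine psd_smul ?_ (hp i)
    have e : msqrt (σ i) * ((1 : Matrix (Fin d) (Fin d) ℂ) - V i * (V i)ᴴ) * (msqrt (σ i))ᴴ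
        = σ i - A₂ i * (A₂ i)ᴴ := by
      rw [msqrt_herm (hσ i), hA₂]
      have h2 := msqrt_mul_self (hσ i)
      calc msqrt (σ i) * ((1 : Matrix (Fin d) (Fin d) ℂ) - V i * (V i)ᴴ) * msqrt (σ i)
          = msqrt (σ i) * msqrt (σ i)
            - msqrt (σ i) * (V i * ((V i)ᴴ * msqrt (σ i))) := by noncomm_ring
        _ = σ i - msqrt (σ i) * V i * (msqrt (σ i) * V i)ᴴ := by
            rw [h2, conjTranspose_mul, msqrt_herm (hσ i)]
            simp only [Matrix.mul_assoc]
    rw [← e]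
    exact (hV4 i).mul_mul_conjTranspose_same (msqrt (σ i))
  -- trace identity
  have htr : trace (Yᴴ * X) = ∑ i, (p i : ℂ) *
      trace (msqrt ((msqrt (σ i) * msqrt (ρ i))ᴴ * (msqrt (σ i) * msqrt (ρ i)))) := by
    rw [hXdef, hYdef, trace_blocks p hp A₂ A₁]
    refine Finset.sum_congr rfl fun i _ => ?_
    congr 1
    rw [hA₂, hA₁]
    beta_reduce
    rw [conjTranspose_mul, msqrt_herm (hσ i), Matrix.mul_assoc, hV2 i]
  -- LHS as a trace
  have hL : ∑ i, p i * fid (ρ i) (σ i) = (trace (Yᴴ * X)).re := by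
    rw [htr, Complex.re_sum]
    refine Finset.sum_congr rfl fun i _ => ?_
    rw [Complex.re_ofReal_mul]
    congr 1
    rw [fid_eq (hρ i) (hσ i)]
  -- factorizations
  obtain ⟨U, hU1, hU2⟩ := factor_eq (msqrt_posSemidef hR).1 X
    (by rw [hXX, msqrt_mul_self hR])
  obtain ⟨W, hW1, hW2⟩ := factor (msqrt_posSemidef hS).1 Y
    (by rw [msqrt_mul_self hS]; exact hSY)
  -- rewrite the trace
  have htr2 : trace (Yᴴ * X) = trace ((msqrt S * msqrt R) * (U * Wᴴ)) := by
    calc trace (Yᴴ * X) = trace (Wᴴ * (msqrt S * (msqrt R * U))) := by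
          rw [← hU1, ← hW1, conjTranspose_mul, msqrt_herm hS]
          simp only [Matrix.mul_assoc]
      _ = trace ((msqrt S * (msqrt R * U)) * Wᴴ) := trace_mul_comm _ _
      _ = trace ((msqrt S * msqrt R) * (U * Wᴴ)) := by simp only [Matrix.mul_assoc]
  -- contraction
  have hC0 : ((1 : Matrix (Fin d) (Fin d) ℂ) - (U * Wᴴ)ᴴ * (U * Wᴴ)).PosSemidef := by
    have h1 : (U * Wᴴ)ᴴ * (U * Wᴴ) = W * (Uᴴ * U) * Wᴴ := by
      simp only [conjTranspose_mul, conjTranspose_conjTranspose, Matrix.mul_assoc]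
    have h2 : W * ((1 : Matrix (Fin n × Fin d) (Fin n × Fin d) ℂ) - Uᴴ * U) * Wᴴ
        = W * Wᴴ - W * (Uᴴ * U) * Wᴴ := by
      rw [Matrix.mul_sub, Matrix.mul_one, Matrix.sub_mul]
    have h3 : (1 : Matrix (Fin d) (Fin d) ℂ) - W * (Uᴴ * U) * Wᴴ
        = (W * ((1 : Matrix (Fin n × Fin d) (Fin n × Fin d) ℂ) - Uᴴ * U) * Wᴴ)
          + (1 - W * Wᴴ) := by
      rw [h2]; abel
    rw [h1, h3]
    exact (hU2.mul_mul_conjTranspose_same W).add hW2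
  have hkey := trace_contraction_le (msqrt S * msqrt R) (U * Wᴴ) hC0
  rw [hL, htr2, fid_eq hR hS]
  exact hkey
end
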